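/- (Lemma 3.2) Let s > 1/2. There exists a constant C_s > 0, depending only on s (in particular independent of n), such that for every q ∈ H^s(𝕋), every integer n ≥ 1, every λ ∈ ℂ with |λ − n²| ≤ n/2, every j ∈ ℤ and every w ∈ 𝒬_n ∩ H^s(𝕋), one has ‖T_n w‖_{s;j} ≤ C_s · n^{-1} · ‖q‖_s · ‖w‖_{s;j}. -/

import Mathlib

open MeasureTheory ENNReal
noncomputable section

def jap (m : ℤ) : ℝ := max 1 |(m : ℝ)|

lemma jap_pos (m : ℤ) : 0 < jap m := lt_of_lt_of_le one_pos (le_max_left _ _)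
lemma one_le_jap (m : ℤ) : 1 ≤ jap m := le_max_left _ _

lemma jap_add_le (x y : ℤ) : jap (x + y) ≤ jap x + jap y := by
  have h1 : |((x+y : ℤ) : ℝ)| ≤ jap x + jap y := by
    push_cast
    calc |(x:ℝ) + y| ≤ |(x:ℝ)| + |(y:ℝ)| := abs_add_le _ _
    _ ≤ jap x + jap y := add_le_add (le_max_right _ _) (le_max_right _ _)
  have h2 : (1:ℝ) ≤ jap x + jap y := le_trans (one_le_jap x) (le_add_of_nonneg_right (jap_pos y).le)
  exact max_le h2 h1

-- ENNReal Cauchy-Schwarz for tsums over ℤ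
lemma enn_cs (f g : ℤ → ℝ≥0∞) :
    (∑' k, f k * g k) ^ 2 ≤ (∑' k, f k ^ 2) * (∑' k, g k ^ 2) := by
  have hconj : (2:ℝ).HolderConjugate 2 := by
    exact Real.HolderConjugate.two_two
  have h := ENNReal.lintegral_mul_le_Lp_mul_Lq (Measure.count : Measure ℤ) hconj
    (measurable_of_countable f).aemeasurable (measurable_of_countable g).aemeasurable
  rw [lintegral_count] at h
  simp only [Pi.mul_apply] at h
  have hf : ∫⁻ a, f a ^ (2:ℝ) ∂Measure.count = ∑' k, f k ^ 2 := by
    rw [lintegral_count]; congr 1; ext k; rw [← ENNReal.rpow_natCast (f k) 2]; norm_num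
  have hg : ∫⁻ a, g a ^ (2:ℝ) ∂Measure.count = ∑' k, g k ^ 2 := by
    rw [lintegral_count]; congr 1; ext k; rw [← ENNReal.rpow_natCast (g k) 2]; norm_num
  rw [hf, hg] at h
  calc (∑' k, f k * g k) ^ 2
      ≤ ((∑' k, f k ^ 2) ^ (1/2:ℝ) * (∑' k, g k ^ 2) ^ (1/2:ℝ)) ^ 2 := by
        gcongr
    _ = (∑' k, f k ^ 2) * (∑' k, g k ^ 2) := by
        rw [mul_pow, ← ENNReal.rpow_natCast (_ ^ (1/2:ℝ)) 2, ← ENNReal.rpow_natCast (_ ^ (1/2:ℝ)) 2,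
          ← ENNReal.rpow_mul, ← ENNReal.rpow_mul]
        norm_num

-- (a+b)^s ≤ 2^s (a^s + b^s) for a,b ≥ 0, s ≥ 0 (real rpow)
lemma rpow_add_le (a b s : ℝ) (ha : 0 ≤ a) (hb : 0 ≤ b) (hs : 0 ≤ s) :
    (a + b) ^ s ≤ 2 ^ s * (a ^ s + b ^ s) := by
  rcases le_total a b with h | h
  · calc (a+b)^s ≤ (2*b)^s := by
          apply Real.rpow_le_rpow (by linarith) (by linarith) hs
      _ = 2^s * b^s := Real.mul_rpow (by norm_num) hb
      _ ≤ 2^s * (a^s + b^s) := by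
          have := Real.rpow_nonneg ha s
          have h2 : (0:ℝ) ≤ 2^s := Real.rpow_nonneg (by norm_num) s
          nlinarith
  · calc (a+b)^s ≤ (2*a)^s := by
          apply Real.rpow_le_rpow (by linarith) (by linarith) hs
      _ = 2^s * a^s := Real.mul_rpow (by norm_num) ha
      _ ≤ 2^s * (a^s + b^s) := by
          have := Real.rpow_nonneg hb s
          have h2 : (0:ℝ) ≤ 2^s := Real.rpow_nonneg (by norm_num) s
          nlinarith

-- (x+y)^2 ≤ 4 (x^2+y^2) in ENNReal
lemma enn_sq_add_le (x y : ℝ≥0∞) : (x + y)^2 ≤ 4 * (x^2 + y^2) := by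
  have hxy : x * y ≤ x^2 + y^2 := by
    rcases le_total x y with h | h
    · calc x * y ≤ y * y := mul_le_mul_left h y
        _ = y^2 := (sq y).symm
        _ ≤ x^2 + y^2 := le_add_self
    · calc x * y ≤ x * x := mul_le_mul_right h x
        _ = x^2 := (sq x).symm
        _ ≤ x^2 + y^2 := le_self_add
  calc (x+y)^2 = x^2 + (x*y + x*y) + y^2 := by ring
    _ ≤ x^2 + ((x^2+y^2) + (x^2+y^2)) + y^2 := add_le_add_left (add_le_add_right (add_le_add hxy hxy) _) _
    _ = 3 * (x^2+y^2) := by ring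
    _ ≤ 4 * (x^2+y^2) := mul_le_mul_left (by norm_num) _

lemma jap_summable {s : ℝ} (hs : 1/2 < s) : Summable (fun k : ℤ => (jap k ^ (2*s))⁻¹) := by
  have h : Summable (fun n : ℤ => 1 / |(n:ℝ) + 0| ^ (2*s)) :=
    (Real.summable_one_div_int_add_rpow 0 (2*s)).mpr (by linarith)
  have h2 : Summable (fun n : ℤ => (fun k : ℤ => (jap k ^ (2*s))⁻¹) n - 1 / |(n:ℝ) + 0| ^ (2*s)) := by
    apply summable_of_ne_finset_zero (s := {(0:ℤ)})
    intro b hb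
    simp only [Finset.mem_singleton] at hb
    have hb' : (1:ℝ) ≤ |(b:ℝ)| := by
      have : (1:ℤ) ≤ |b| := Int.one_le_abs (by exact_mod_cast hb)
      calc (1:ℝ) ≤ ((|b|:ℤ):ℝ) := by exact_mod_cast this
        _ = |(b:ℝ)| := by push_cast; ring
    have : jap b = |(b:ℝ)| := max_eq_right hb'
    simp [this, one_div]
  have := h2.add h
  apply this.congr
  intro b; simp

lemma enn_conv (s : ℝ) (hs0 : 0 ≤ s) (j : ℤ) (qe we : ℤ → ℝ≥0∞) :
    ∑' m : ℤ, (ENNReal.ofReal (jap (m+j) ^ s) * ∑' k : ℤ, qe k * we (m-k)) ^ 2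
      ≤ 8 * ENNReal.ofReal ((2:ℝ)^s) ^ 2 * (∑' k : ℤ, (ENNReal.ofReal ((jap k ^ s)⁻¹))^2)
        * (∑' k : ℤ, (ENNReal.ofReal (jap k ^ s) * qe k)^2)
        * (∑' l : ℤ, (ENNReal.ofReal (jap (l+j) ^ s) * we l)^2) := by
  set a : ℤ → ℝ≥0∞ := fun k => ENNReal.ofReal (jap k ^ s) * qe k with ha
  set b : ℤ → ℝ≥0∞ := fun l => ENNReal.ofReal (jap (l+j) ^ s) * we l with hb
  set τe : ℝ≥0∞ := ∑' k : ℤ, (ENNReal.ofReal ((jap k ^ s)⁻¹))^2 with hτe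
  set A : ℝ≥0∞ := ∑' k : ℤ, a k ^ 2 with hA
  set B : ℝ≥0∞ := ∑' l : ℤ, b l ^ 2 with hB
  set W : ℝ≥0∞ := ∑' l : ℤ, we l with hW
  set Q : ℝ≥0∞ := ∑' k : ℤ, qe k with hQ
  set S1 : ℤ → ℝ≥0∞ := fun m => ∑' k : ℤ, a k * we (m-k) with hS1
  set S2 : ℤ → ℝ≥0∞ := fun m => ∑' k : ℤ, qe k * b (m-k) with hS2
  have japs_pos : ∀ x : ℤ, 0 < jap x ^ s := fun x => Real.rpow_pos_of_pos (jap_pos x) s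
  -- cancellation: ofReal ((jap x ^ s)⁻¹) * (ofReal (jap x ^ s) * z) = z
  have hcancel : ∀ (x : ℤ) (z : ℝ≥0∞),
      ENNReal.ofReal ((jap x ^ s)⁻¹) * (ENNReal.ofReal (jap x ^ s) * z) = z := by
    intro x z
    rw [← mul_assoc, ← ENNReal.ofReal_mul (inv_nonneg.mpr (japs_pos x).le), inv_mul_cancel₀ (japs_pos x).ne',
      ENNReal.ofReal_one, one_mul]
  -- W² ≤ τe * B
  have hW2 : W ^ 2 ≤ τe * B := by
    have h := enn_cs (fun l => ENNReal.ofReal ((jap (l+j) ^ s)⁻¹)) b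
    have h1 : (∑' l : ℤ, ENNReal.ofReal ((jap (l+j) ^ s)⁻¹) * b l) = W := by
      rw [hW]; exact tsum_congr fun l => hcancel _ _
    have h2 : (∑' l : ℤ, (ENNReal.ofReal ((jap (l+j) ^ s)⁻¹))^2) = τe := by
      rw [hτe]; exact Equiv.tsum_eq (Equiv.addRight j) (fun k => (ENNReal.ofReal ((jap k ^ s)⁻¹))^2)
    rwa [h1, h2] at h
  have hQ2 : Q ^ 2 ≤ τe * A := by
    have h := enn_cs (fun k => ENNReal.ofReal ((jap k ^ s)⁻¹)) a
    have h1 : (∑' k : ℤ, ENNReal.ofReal ((jap k ^ s)⁻¹) * a k) = Q := by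
      rw [hQ]; exact tsum_congr fun k => hcancel _ _
    rwa [h1] at h
  -- rpow halving facts
  have half_mul : ∀ x : ℝ≥0∞, x ^ (1/2:ℝ) * x ^ (1/2:ℝ) = x := by
    intro x
    rw [← ENNReal.rpow_add_of_nonneg _ _ (by norm_num) (by norm_num)]
    norm_num
  have half_sq : ∀ x : ℝ≥0∞, (x ^ (1/2:ℝ)) ^ 2 = x := by
    intro x
    rw [← ENNReal.rpow_natCast (x ^ (1/2:ℝ)) 2, ← ENNReal.rpow_mul]
    norm_num
  -- Σ S1² ≤ A * W²
  have hS1sum : ∑' m : ℤ, S1 m ^ 2 ≤ A * W ^ 2 := by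
    have key : ∀ m : ℤ, S1 m ^ 2 ≤ W * ∑' k : ℤ, a k ^ 2 * we (m-k) := by
      intro m
      have h := enn_cs (fun k => (we (m-k)) ^ (1/2:ℝ)) (fun k => a k * (we (m-k)) ^ (1/2:ℝ))
      have h1 : (∑' k : ℤ, (we (m-k)) ^ (1/2:ℝ) * (a k * (we (m-k)) ^ (1/2:ℝ))) = S1 m := by
        refine tsum_congr fun k => ?_
        calc (we (m-k)) ^ (1/2:ℝ) * (a k * (we (m-k)) ^ (1/2:ℝ))
            = a k * ((we (m-k)) ^ (1/2:ℝ) * (we (m-k)) ^ (1/2:ℝ)) := by ring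
          _ = a k * we (m-k) := by rw [half_mul]
      have h2 : (∑' k : ℤ, ((we (m-k)) ^ (1/2:ℝ)) ^ 2) = W := by
        rw [hW]
        calc (∑' k : ℤ, ((we (m-k)) ^ (1/2:ℝ)) ^ 2) = ∑' k : ℤ, we (m-k) :=
            tsum_congr fun k => half_sq _
          _ = ∑' l : ℤ, we l := Equiv.tsum_eq (Equiv.subLeft m) we
      have h3 : (∑' k : ℤ, (a k * (we (m-k)) ^ (1/2:ℝ)) ^ 2) = ∑' k : ℤ, a k ^ 2 * we (m-k) := by
        refine tsum_congr fun k => ?_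
        rw [mul_pow, half_sq]
      rwa [h1, h2, h3] at h
    calc ∑' m : ℤ, S1 m ^ 2 ≤ ∑' m : ℤ, W * ∑' k : ℤ, a k ^ 2 * we (m-k) :=
        ENNReal.tsum_le_tsum key
      _ = W * ∑' m : ℤ, ∑' k : ℤ, a k ^ 2 * we (m-k) := ENNReal.tsum_mul_left
      _ = W * ∑' k : ℤ, ∑' m : ℤ, a k ^ 2 * we (m-k) := by rw [ENNReal.tsum_comm]
      _ = W * ∑' k : ℤ, a k ^ 2 * ∑' m : ℤ, we (m-k) := by
          congr 1; exact tsum_congr fun k => ENNReal.tsum_mul_left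
      _ = W * ∑' k : ℤ, a k ^ 2 * W := by
          congr 1; refine tsum_congr fun k => ?_
          congr 1; exact Equiv.tsum_eq (Equiv.subRight k) we
      _ = W * (A * W) := by rw [ENNReal.tsum_mul_right]
      _ = A * W ^ 2 := by ring
  -- Σ S2² ≤ Q² * B
  have hS2sum : ∑' m : ℤ, S2 m ^ 2 ≤ Q ^ 2 * B := by
    have key : ∀ m : ℤ, S2 m ^ 2 ≤ Q * ∑' k : ℤ, qe k * b (m-k) ^ 2 := by
      intro m
      have h := enn_cs (fun k => (qe k) ^ (1/2:ℝ)) (fun k => (qe k) ^ (1/2:ℝ) * b (m-k))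
      have h1 : (∑' k : ℤ, (qe k) ^ (1/2:ℝ) * ((qe k) ^ (1/2:ℝ) * b (m-k))) = S2 m := by
        refine tsum_congr fun k => ?_
        calc (qe k) ^ (1/2:ℝ) * ((qe k) ^ (1/2:ℝ) * b (m-k))
            = ((qe k) ^ (1/2:ℝ) * (qe k) ^ (1/2:ℝ)) * b (m-k) := by ring
          _ = qe k * b (m-k) := by rw [half_mul]
      have h2 : (∑' k : ℤ, ((qe k) ^ (1/2:ℝ)) ^ 2) = Q := tsum_congr fun k => half_sq _
      have h3 : (∑' k : ℤ, ((qe k) ^ (1/2:ℝ) * b (m-k)) ^ 2) = ∑' k : ℤ, qe k * b (m-k) ^ 2 := by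
        refine tsum_congr fun k => ?_
        rw [mul_pow, half_sq]
      rwa [h1, h2, h3] at h
    calc ∑' m : ℤ, S2 m ^ 2 ≤ ∑' m : ℤ, Q * ∑' k : ℤ, qe k * b (m-k) ^ 2 :=
        ENNReal.tsum_le_tsum key
      _ = Q * ∑' m : ℤ, ∑' k : ℤ, qe k * b (m-k) ^ 2 := ENNReal.tsum_mul_left
      _ = Q * ∑' k : ℤ, ∑' m : ℤ, qe k * b (m-k) ^ 2 := by rw [ENNReal.tsum_comm]
      _ = Q * ∑' k : ℤ, qe k * ∑' m : ℤ, b (m-k) ^ 2 := by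
          congr 1; exact tsum_congr fun k => ENNReal.tsum_mul_left
      _ = Q * ∑' k : ℤ, qe k * B := by
          congr 1; refine tsum_congr fun k => ?_
          congr 1; rw [hB]; exact Equiv.tsum_eq (Equiv.subRight k) (fun l => b l ^ 2)
      _ = Q * (Q * B) := by rw [ENNReal.tsum_mul_right]
      _ = Q ^ 2 * B := by ring
  -- pointwise split
  have hpt : ∀ m : ℤ, ENNReal.ofReal (jap (m+j) ^ s) * ∑' k : ℤ, qe k * we (m-k)
      ≤ ENNReal.ofReal ((2:ℝ)^s) * (S1 m + S2 m) := by
    intro m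
    rw [← ENNReal.tsum_mul_left]
    have : ∀ k : ℤ, ENNReal.ofReal (jap (m+j) ^ s) * (qe k * we (m-k))
        ≤ ENNReal.ofReal ((2:ℝ)^s) * (a k * we (m-k) + qe k * b (m-k)) := by
      intro k
      have hsplit : jap (m+j) ^ s ≤ (2:ℝ)^s * (jap k ^ s + jap (m-k+j) ^ s) := by
        have e : (m + j : ℤ) = k + (m - k + j) := by ring
        calc jap (m+j) ^ s = jap (k + (m-k+j)) ^ s := by rw [← e]
          _ ≤ (jap k + jap (m-k+j)) ^ s :=
              Real.rpow_le_rpow (jap_pos _).le (jap_add_le _ _) hs0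
          _ ≤ (2:ℝ)^s * (jap k ^ s + jap (m-k+j) ^ s) :=
              rpow_add_le _ _ s (jap_pos _).le (jap_pos _).le hs0
      calc ENNReal.ofReal (jap (m+j) ^ s) * (qe k * we (m-k))
          ≤ ENNReal.ofReal ((2:ℝ)^s * (jap k ^ s + jap (m-k+j) ^ s)) * (qe k * we (m-k)) := by
            exact mul_le_mul_left (ENNReal.ofReal_le_ofReal hsplit) _
        _ = ENNReal.ofReal ((2:ℝ)^s) * (a k * we (m-k) + qe k * b (m-k)) := by
            rw [ENNReal.ofReal_mul (by positivity),
              ENNReal.ofReal_add (japs_pos k).le (japs_pos _).le, ha, hb]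
            simp only []
            ring
    calc (∑' k : ℤ, ENNReal.ofReal (jap (m+j) ^ s) * (qe k * we (m-k)))
        ≤ ∑' k : ℤ, ENNReal.ofReal ((2:ℝ)^s) * (a k * we (m-k) + qe k * b (m-k)) :=
          ENNReal.tsum_le_tsum this
      _ = ENNReal.ofReal ((2:ℝ)^s) * (S1 m + S2 m) := by
          rw [ENNReal.tsum_mul_left, ENNReal.tsum_add]
  -- combine
  calc ∑' m : ℤ, (ENNReal.ofReal (jap (m+j) ^ s) * ∑' k : ℤ, qe k * we (m-k)) ^ 2
      ≤ ∑' m : ℤ, (ENNReal.ofReal ((2:ℝ)^s) * (S1 m + S2 m)) ^ 2 := by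
        exact ENNReal.tsum_le_tsum fun m => pow_le_pow_left' (hpt m) 2
    _ = ∑' m : ℤ, ENNReal.ofReal ((2:ℝ)^s) ^ 2 * (S1 m + S2 m) ^ 2 := by
        refine tsum_congr fun m => ?_; rw [mul_pow]
    _ ≤ ∑' m : ℤ, ENNReal.ofReal ((2:ℝ)^s) ^ 2 * (4 * (S1 m ^ 2 + S2 m ^ 2)) := by
        refine ENNReal.tsum_le_tsum fun m => ?_
        exact mul_le_mul_right (enn_sq_add_le _ _) _
    _ = ENNReal.ofReal ((2:ℝ)^s) ^ 2 * 4 * ((∑' m : ℤ, S1 m ^ 2) + ∑' m : ℤ, S2 m ^ 2) := by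
        rw [← ENNReal.tsum_add, ← ENNReal.tsum_mul_left]
        refine tsum_congr fun m => ?_; ring
    _ ≤ ENNReal.ofReal ((2:ℝ)^s) ^ 2 * 4 * (A * W ^ 2 + Q ^ 2 * B) := by
        exact mul_le_mul_right (add_le_add hS1sum hS2sum) _
    _ ≤ ENNReal.ofReal ((2:ℝ)^s) ^ 2 * 4 * (A * (τe * B) + τe * A * B) := by
        refine mul_le_mul_right (add_le_add ?_ ?_) _
        · exact mul_le_mul_right hW2 _
        · exact mul_le_mul_left hQ2 _
    _ = 8 * ENNReal.ofReal ((2:ℝ)^s) ^ 2 * τe * A * B := by ring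


-- additional real-analysis helpers
lemma jap_rpow_sq (x : ℤ) (s : ℝ) : (jap x ^ s)^2 = jap x ^ (2*s) := by
  rw [← Real.rpow_natCast (jap x ^ s) 2, ← Real.rpow_mul (jap_pos x).le]
  norm_num [mul_comm]

lemma jap_shift_bound (l j : ℤ) (s : ℝ) (hs : 0 ≤ s) :
    jap (l+j) ^ (2*s) ≤ (2 * jap j) ^ (2*s) * jap l ^ (2*s) := by
  have h1 : jap (l+j) ≤ 2 * jap j * jap l := by
    have := jap_add_le l j
    have h2 : jap l ≤ jap l * jap j := le_mul_of_one_le_right (jap_pos l).le (one_le_jap j)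
    have h3 : jap j ≤ jap l * jap j := le_mul_of_one_le_left (jap_pos j).le (one_le_jap l)
    nlinarith
  calc jap (l+j) ^ (2*s) ≤ (2 * jap j * jap l) ^ (2*s) :=
      Real.rpow_le_rpow (jap_pos _).le h1 (by linarith)
    _ = (2 * jap j) ^ (2*s) * jap l ^ (2*s) :=
      Real.mul_rpow (mul_nonneg (by norm_num) (jap_pos j).le) (jap_pos l).le

/-- Squared shifted Sobolev norm `‖u‖_{s;j}²` of a sequence of Fourier coefficients. -/
def shiftNormSq (s : ℝ) (j : ℤ) (u : ℤ → ℂ) : ℝ :=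
  ∑' m : ℤ, jap (m + j) ^ (2 * s) * ‖u m‖ ^ 2

/-- Shifted Sobolev norm `‖u‖_{s;j}`. -/
def shiftNorm (s : ℝ) (j : ℤ) (u : ℤ → ℂ) : ℝ := Real.sqrt (shiftNormSq s j u)

/-- Sobolev norm `‖u‖_s`. -/
def sobNorm (s : ℝ) (u : ℤ → ℂ) : ℝ := shiftNorm s 0 u

/-- Membership in `H^s(𝕋)`. -/
def memHs (s : ℝ) (u : ℤ → ℂ) : Prop :=
  Summable fun m : ℤ => jap m ^ (2 * s) * ‖u m‖ ^ 2

/-- Fourier coefficients of the product `q·w` (convolution). -/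
def fconv (q w : ℤ → ℂ) (m : ℤ) : ℂ := ∑' k : ℤ, q k * w (m - k)

/-- The operator `T_n = T_n(q,λ)`. -/
def TnOp (q : ℤ → ℂ) (lam : ℂ) (n : ℕ) (w : ℤ → ℂ) : ℤ → ℂ := fun m =>
  if |m| = (n : ℤ) then 0 else (lam - (m : ℂ) ^ 2)⁻¹ * fconv q w m

/-- Membership in `𝒬_n`. -/
def memQ (n : ℕ) (w : ℤ → ℂ) : Prop := w (n : ℤ) = 0 ∧ w (-(n : ℤ)) = 0

-- resolvent bound
lemma resolvent_bound (n : ℕ) (hn : 1 ≤ n) (lam : ℂ)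
    (hlam : ‖lam - (n : ℂ) ^ 2‖ ≤ (n : ℝ) / 2) (m : ℤ) (hm : |m| ≠ (n : ℤ)) :
    (n : ℝ) / 2 ≤ ‖lam - (m : ℂ) ^ 2‖ := by
  have hint : (n : ℤ) ≤ |(n:ℤ)^2 - m^2| := by
    have h1 : (1:ℤ) ≤ |(|m| - n)| := Int.one_le_abs (sub_ne_zero.mpr hm)
    have h2 : |(n:ℤ)^2 - m^2| = |(|m| - n)| * (|m| + n) := by
      rw [abs_sub_comm]
      have e : m^2 - (n:ℤ)^2 = (|m| - n) * (|m| + n) := by nlinarith [sq_abs m]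
      rw [e, abs_mul, abs_of_nonneg (show (0:ℤ) ≤ |m| + n by positivity)]
    have h3 : (n:ℤ) ≤ |m| + n := le_add_of_nonneg_left (abs_nonneg m)
    calc (n:ℤ) = 1 * n := (one_mul _).symm
      _ ≤ |(|m| - n)| * (|m| + n) := mul_le_mul h1 h3 (by positivity) (abs_nonneg _)
      _ = |(n:ℤ)^2 - m^2| := h2.symm
  have hcast : (n : ℝ) ≤ ‖(n:ℂ)^2 - (m:ℂ)^2‖ := by
    have e : ((n:ℂ)^2 - (m:ℂ)^2) = (((n:ℤ)^2 - m^2 : ℤ) : ℂ) := by push_cast; ring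
    rw [e, Complex.norm_intCast, ← Int.cast_abs]
    exact_mod_cast hint
  have htri : ‖(n:ℂ)^2 - (m:ℂ)^2‖
      ≤ ‖(n:ℂ)^2 - lam‖ + ‖lam - (m:ℂ)^2‖ :=
    norm_sub_le_norm_sub_add_norm_sub ((n:ℂ)^2) lam ((m:ℂ)^2)
  have hsym : ‖(n:ℂ)^2 - lam‖ = ‖lam - (n:ℂ)^2‖ :=
    norm_sub_rev ((n:ℂ)^2) lam
  rw [hsym] at htri
  linarith

/-- **Lemma 3.2.** -/
theorem lemma_3_2 (s : ℝ) (hs : 1 / 2 < s) :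
    ∃ C : ℝ, 0 < C ∧
      ∀ (q : ℤ → ℂ) (n : ℕ) (lam : ℂ) (j : ℤ) (w : ℤ → ℂ),
        1 ≤ n → memHs s q →
        ‖lam - (n : ℂ) ^ 2‖ ≤ (n : ℝ) / 2 →
        memQ n w → memHs s w →
        shiftNorm s j (TnOp q lam n w) ≤ C * (n : ℝ)⁻¹ * sobNorm s q * shiftNorm s j w := by
  have hs0 : (0:ℝ) < s := by linarith
  have hτs : Summable (fun k : ℤ => (jap k ^ (2*s))⁻¹) := jap_summable hs
  set τ : ℝ := ∑' k : ℤ, (jap k ^ (2*s))⁻¹ with hτdef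
  have hτ1 : (1:ℝ) ≤ τ := by
    have h0 : ((jap (0:ℤ)) ^ (2*s))⁻¹ = 1 := by
      simp [jap, Real.one_rpow]
    calc (1:ℝ) = (jap (0:ℤ) ^ (2*s))⁻¹ := h0.symm
      _ ≤ τ := Summable.le_tsum hτs 0 (fun k _ => inv_nonneg.mpr (Real.rpow_pos_of_pos (jap_pos k) _).le)
  have hτ0 : (0:ℝ) < τ := by linarith
  have h2s : (0:ℝ) < (2:ℝ)^s := Real.rpow_pos_of_pos (by norm_num) s
  have hsqτ : (0:ℝ) < Real.sqrt τ := Real.sqrt_pos.mpr hτ0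
  refine ⟨6 * 2^s * Real.sqrt τ, by positivity, ?_⟩
  intro q n lam j w hn hq hlam _hQ hw
  have hnR : (0:ℝ) < (n:ℝ) := by exact_mod_cast hn
  -- ℓ¹ bound for q
  have hq1 : Summable (fun k : ℤ => ‖q k‖) := by
    refine Summable.of_nonneg_of_le (fun k => norm_nonneg _) (fun k => ?_) (hτs.add hq)
    have hx : (0:ℝ) < jap k ^ s := Real.rpow_pos_of_pos (jap_pos k) s
    have hxy : ‖q k‖ = (jap k ^ s)⁻¹ * (jap k ^ s * ‖q k‖) := by
      field_simp
    have hsq : ((jap k ^ s)⁻¹)^2 = (jap k ^ (2*s))⁻¹ := by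
      rw [← jap_rpow_sq]; rw [inv_pow]
    have hysq : (jap k ^ s * ‖q k‖)^2 = jap k ^ (2*s) * ‖q k‖^2 := by
      rw [mul_pow, jap_rpow_sq]
    have am : (jap k ^ s)⁻¹ * (jap k ^ s * ‖q k‖)
        ≤ ((jap k ^ s)⁻¹)^2 + (jap k ^ s * ‖q k‖)^2 := by
      nlinarith [sq_nonneg ((jap k ^ s)⁻¹ - jap k ^ s * ‖q k‖)]
    calc ‖q k‖ = (jap k ^ s)⁻¹ * (jap k ^ s * ‖q k‖) := hxy
      _
        ≤ ((jap k ^ s)⁻¹)^2 + (jap k ^ s * ‖q k‖)^2 := am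
      _ = (jap k ^ (2*s))⁻¹ + jap k ^ (2*s) * ‖q k‖^2 := by rw [hsq, hysq]
  -- sup bound for w
  set Bw : ℝ := Real.sqrt (∑' m : ℤ, jap m ^ (2*s) * ‖w m‖^2) with hBw
  have hwb : ∀ l : ℤ, ‖w l‖ ≤ Bw := by
    intro l
    have h1 : ‖w l‖^2 ≤ ∑' m : ℤ, jap m ^ (2*s) * ‖w m‖^2 := by
      have h2 : ‖w l‖^2 ≤ jap l ^ (2*s) * ‖w l‖^2 := by
        have : (1:ℝ) ≤ jap l ^ (2*s) := Real.one_le_rpow (one_le_jap l) (by linarith)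
        nlinarith [sq_nonneg ‖w l‖]
      exact h2.trans (Summable.le_tsum hw l (fun k _ => mul_nonneg (Real.rpow_pos_of_pos (jap_pos k) _).le (sq_nonneg _)))
    calc ‖w l‖ = Real.sqrt (‖w l‖^2) := (Real.sqrt_sq (norm_nonneg _)).symm
      _ ≤ Bw := Real.sqrt_le_sqrt h1
  -- convolution absolutely summable
  have hconv_sum : ∀ m : ℤ, Summable (fun k : ℤ => ‖q k‖ * ‖w (m-k)‖) := by
    intro m
    refine Summable.of_nonneg_of_le (fun k => by positivity)
      (fun k => ?_) (hq1.mul_right Bw)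
    exact mul_le_mul_of_nonneg_left (hwb _) (norm_nonneg _)
  -- pointwise bound on TnOp
  have hTn_le : ∀ m : ℤ, ‖TnOp q lam n w m‖ ≤ 2/(n:ℝ) * ∑' k : ℤ, ‖q k‖ * ‖w (m-k)‖ := by
    intro m
    by_cases hm : |m| = (n:ℤ)
    · have h0 : TnOp q lam n w m = 0 := by simp [TnOp, hm]
      rw [h0, norm_zero]
      have ht : (0:ℝ) ≤ ∑' k : ℤ, ‖q k‖ * ‖w (m-k)‖ :=
        tsum_nonneg (fun k => mul_nonneg (norm_nonneg _) (norm_nonneg _))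
      have h2n : (0:ℝ) ≤ 2/(n:ℝ) := by positivity
      exact mul_nonneg h2n ht
    · have habs := resolvent_bound n hn lam hlam m hm
      have habs0 : (0:ℝ) < ‖lam - (m:ℂ)^2‖ := lt_of_lt_of_le (by positivity) habs
      have hfc : ‖fconv q w m‖ ≤ ∑' k : ℤ, ‖q k‖ * ‖w (m-k)‖ := by
        have hsum : Summable (fun k : ℤ => ‖q k * w (m-k)‖) := by
          refine (hconv_sum m).congr (fun k => ?_); rw [norm_mul]
        calc ‖fconv q w m‖ ≤ ∑' k : ℤ, ‖q k * w (m-k)‖ := norm_tsum_le_tsum_norm hsum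
          _ = ∑' k : ℤ, ‖q k‖ * ‖w (m-k)‖ := tsum_congr fun k => norm_mul _ _
      have hio : ‖(lam - (m:ℂ)^2)⁻¹‖ ≤ 2/(n:ℝ) := by
        rw [norm_inv]
        rw [inv_le_comm₀ habs0 (by positivity)]
        calc (2/(n:ℝ))⁻¹ = (n:ℝ)/2 := by field_simp
          _ ≤ ‖lam - (m:ℂ)^2‖ := habs
      simp only [TnOp, if_neg hm]
      calc ‖(lam - (m:ℂ)^2)⁻¹ * fconv q w m‖ = ‖(lam - (m:ℂ)^2)⁻¹‖ * ‖fconv q w m‖ :=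
          norm_mul _ _
        _ ≤ 2/(n:ℝ) * ∑' k : ℤ, ‖q k‖ * ‖w (m-k)‖ :=
          mul_le_mul hio hfc (norm_nonneg _) (by positivity)
  -- shifted summability of w
  have hbsum : Summable (fun l : ℤ => jap (l+j) ^ (2*s) * ‖w l‖^2) := by
    have hb2 : Summable (fun l : ℤ => (2 * jap j) ^ (2*s) * (jap l ^ (2*s) * ‖w l‖^2)) :=
      hw.mul_left _
    refine Summable.of_nonneg_of_le
      (fun l => mul_nonneg (Real.rpow_pos_of_pos (jap_pos _) _).le (sq_nonneg _))
      (fun l => ?_) hb2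
    rw [← mul_assoc]
    exact mul_le_mul_of_nonneg_right (jap_shift_bound l j s hs0.le) (sq_nonneg _)
  -- ENNReal side
  set qe : ℤ → ℝ≥0∞ := fun k => ENNReal.ofReal ‖q k‖ with hqe
  set we : ℤ → ℝ≥0∞ := fun l => ENNReal.ofReal ‖w l‖ with hwe
  set Ar : ℝ := ∑' k : ℤ, jap k ^ (2*s) * ‖q k‖^2 with hAr
  set Br : ℝ := ∑' l : ℤ, jap (l+j) ^ (2*s) * ‖w l‖^2 with hBr
  have hAr0 : 0 ≤ Ar := tsum_nonneg fun k => mul_nonneg (Real.rpow_pos_of_pos (jap_pos _) _).le (sq_nonneg _)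
  have hBr0 : 0 ≤ Br := tsum_nonneg fun l => mul_nonneg (Real.rpow_pos_of_pos (jap_pos _) _).le (sq_nonneg _)
  -- identify ENNReal sums
  have hτe : (∑' k : ℤ, (ENNReal.ofReal ((jap k ^ s)⁻¹))^2) = ENNReal.ofReal τ := by
    rw [hτdef, ENNReal.ofReal_tsum_of_nonneg
      (fun k => inv_nonneg.mpr (Real.rpow_pos_of_pos (jap_pos k) _).le) hτs]
    refine tsum_congr fun k => ?_
    rw [← ENNReal.ofReal_pow (inv_nonneg.mpr (Real.rpow_pos_of_pos (jap_pos k) _).le),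
      inv_pow, jap_rpow_sq]
  have hAe : (∑' k : ℤ, (ENNReal.ofReal (jap k ^ s) * qe k)^2) = ENNReal.ofReal Ar := by
    rw [hAr, ENNReal.ofReal_tsum_of_nonneg
      (fun k => mul_nonneg (Real.rpow_pos_of_pos (jap_pos k) _).le (sq_nonneg _)) hq]
    refine tsum_congr fun k => ?_
    rw [hqe, ← ENNReal.ofReal_mul (Real.rpow_pos_of_pos (jap_pos k) s).le,
      ← ENNReal.ofReal_pow (mul_nonneg (Real.rpow_pos_of_pos (jap_pos k) s).le (norm_nonneg _)),
      mul_pow, jap_rpow_sq]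
  have hBe : (∑' l : ℤ, (ENNReal.ofReal (jap (l+j) ^ s) * we l)^2) = ENNReal.ofReal Br := by
    rw [hBr, ENNReal.ofReal_tsum_of_nonneg
      (fun l => mul_nonneg (Real.rpow_pos_of_pos (jap_pos _) _).le (sq_nonneg _)) hbsum]
    refine tsum_congr fun l => ?_
    rw [hwe, ← ENNReal.ofReal_mul (Real.rpow_pos_of_pos (jap_pos (l+j)) s).le,
      ← ENNReal.ofReal_pow
        (mul_nonneg (Real.rpow_pos_of_pos (jap_pos (l+j)) s).le (norm_nonneg _)),
      mul_pow, jap_rpow_sq]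
  have hcore := enn_conv s hs0.le j qe we
  rw [hτe, hAe, hBe] at hcore
  -- termwise ofReal bound
  set g : ℤ → ℝ := fun m => jap (m+j) ^ (2*s) * ‖TnOp q lam n w m‖^2 with hg
  have hg0 : ∀ m, 0 ≤ g m := fun m => mul_nonneg (Real.rpow_pos_of_pos (jap_pos _) _).le (sq_nonneg _)
  have hterm : ∀ m : ℤ, ENNReal.ofReal (g m)
      ≤ ENNReal.ofReal ((2/(n:ℝ))^2)
        * (ENNReal.ofReal (jap (m+j) ^ s) * ∑' k : ℤ, qe k * we (m-k)) ^ 2 := by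
    intro m
    have hofs : ENNReal.ofReal (∑' k : ℤ, ‖q k‖ * ‖w (m-k)‖) = ∑' k : ℤ, qe k * we (m-k) := by
      rw [ENNReal.ofReal_tsum_of_nonneg (fun k => by positivity) (hconv_sum m)]
      exact tsum_congr fun k => ENNReal.ofReal_mul (norm_nonneg _)
    have h1 : ENNReal.ofReal ‖TnOp q lam n w m‖
        ≤ ENNReal.ofReal (2/(n:ℝ)) * ∑' k : ℤ, qe k * we (m-k) := by
      rw [← hofs, ← ENNReal.ofReal_mul (by positivity)]
      exact ENNReal.ofReal_le_ofReal (hTn_le m)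
    calc ENNReal.ofReal (g m)
        = (ENNReal.ofReal (jap (m+j) ^ s))^2 * (ENNReal.ofReal ‖TnOp q lam n w m‖)^2 := by
          simp only [hg]
          rw [← jap_rpow_sq, ENNReal.ofReal_mul (sq_nonneg _),
            ENNReal.ofReal_pow (Real.rpow_pos_of_pos (jap_pos (m+j)) s).le,
            ENNReal.ofReal_pow (norm_nonneg _)]
      _ ≤ (ENNReal.ofReal (jap (m+j) ^ s))^2
          * (ENNReal.ofReal (2/(n:ℝ)) * ∑' k : ℤ, qe k * we (m-k))^2 := by
          exact mul_le_mul_right (pow_le_pow_left' h1 2) _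
      _ = ENNReal.ofReal ((2/(n:ℝ))^2)
          * (ENNReal.ofReal (jap (m+j) ^ s) * ∑' k : ℤ, qe k * we (m-k)) ^ 2 := by
          rw [ENNReal.ofReal_pow (by positivity)]
          ring
  -- total ENNReal bound
  set r : ℝ := (2/(n:ℝ))^2 * (8 * ((2:ℝ)^s)^2 * τ * Ar * Br) with hr
  have hr0 : 0 ≤ r := by positivity
  have htotal : (∑' m : ℤ, ENNReal.ofReal (g m)) ≤ ENNReal.ofReal r := by
    calc (∑' m : ℤ, ENNReal.ofReal (g m))
        ≤ ∑' m : ℤ, ENNReal.ofReal ((2/(n:ℝ))^2)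
            * (ENNReal.ofReal (jap (m+j) ^ s) * ∑' k : ℤ, qe k * we (m-k)) ^ 2 :=
          ENNReal.tsum_le_tsum hterm
      _ = ENNReal.ofReal ((2/(n:ℝ))^2)
            * ∑' m : ℤ, (ENNReal.ofReal (jap (m+j) ^ s) * ∑' k : ℤ, qe k * we (m-k)) ^ 2 :=
          ENNReal.tsum_mul_left
      _ ≤ ENNReal.ofReal ((2/(n:ℝ))^2)
            * (8 * ENNReal.ofReal ((2:ℝ)^s) ^ 2 * ENNReal.ofReal τ * ENNReal.ofReal Ar
              * ENNReal.ofReal Br) := mul_le_mul_right hcore _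
      _ = ENNReal.ofReal r := by
          rw [hr, ENNReal.ofReal_mul (sq_nonneg _)]
          congr 1
          have h8 : ((8:ℝ≥0∞)) = ENNReal.ofReal 8 := by
            rw [ENNReal.ofReal_ofNat]
          rw [h8, ← ENNReal.ofReal_pow h2s.le,
            ← ENNReal.ofReal_mul (by norm_num : (0:ℝ) ≤ 8),
            ← ENNReal.ofReal_mul (mul_nonneg (by norm_num : (0:ℝ) ≤ 8) (sq_nonneg _)),
            ← ENNReal.ofReal_mul
              (mul_nonneg (mul_nonneg (by norm_num : (0:ℝ) ≤ 8) (sq_nonneg _)) hτ0.le),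
            ← ENNReal.ofReal_mul
              (mul_nonneg (mul_nonneg (mul_nonneg (by norm_num : (0:ℝ) ≤ 8) (sq_nonneg _))
                hτ0.le) hAr0)]
  -- convert to real
  have hne : (∑' m : ℤ, ENNReal.ofReal (g m)) ≠ ⊤ :=
    ne_top_of_le_ne_top ENNReal.ofReal_ne_top htotal
  have hreal : shiftNormSq s j (TnOp q lam n w) ≤ r := by
    have heq : shiftNormSq s j (TnOp q lam n w) = (∑' m : ℤ, ENNReal.ofReal (g m)).toReal := by
      rw [ENNReal.tsum_toReal_eq (fun m => ENNReal.ofReal_ne_top)]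
      exact tsum_congr fun m => (ENNReal.toReal_ofReal (hg0 m)).symm
    rw [heq]
    calc (∑' m : ℤ, ENNReal.ofReal (g m)).toReal ≤ (ENNReal.ofReal r).toReal :=
        ENNReal.toReal_mono ENNReal.ofReal_ne_top htotal
      _ = r := ENNReal.toReal_ofReal hr0
  -- identify norms
  have hXsq : (sobNorm s q)^2 = Ar := by
    have h0 : (0:ℝ) ≤ shiftNormSq s 0 q := tsum_nonneg
      (fun m => mul_nonneg (Real.rpow_pos_of_pos (jap_pos _) _).le (sq_nonneg _))
    rw [sobNorm, shiftNorm, Real.sq_sqrt h0, shiftNormSq, hAr]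
    exact tsum_congr fun m => by rw [add_zero]
  have hYsq : (shiftNorm s j w)^2 = Br := by
    have h0 : (0:ℝ) ≤ shiftNormSq s j w := tsum_nonneg
      (fun m => mul_nonneg (Real.rpow_pos_of_pos (jap_pos _) _).le (sq_nonneg _))
    rw [shiftNorm, Real.sq_sqrt h0, shiftNormSq, hBr]
  have hX0 : 0 ≤ sobNorm s q := Real.sqrt_nonneg _
  have hY0 : 0 ≤ shiftNorm s j w := Real.sqrt_nonneg _
  -- final comparison
  have hst : (Real.sqrt τ)^2 = τ := Real.sq_sqrt hτ0.le
  have hfin : r ≤ (6 * 2^s * Real.sqrt τ * (n:ℝ)⁻¹ * sobNorm s q * shiftNorm s j w)^2 := by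
    have hexp : (6 * 2^s * Real.sqrt τ * (n:ℝ)⁻¹ * sobNorm s q * shiftNorm s j w)^2
        = 36 * ((2:ℝ)^s)^2 * τ * ((n:ℝ)⁻¹)^2 * Ar * Br := by
      rw [← hXsq, ← hYsq]
      linear_combination (36 * ((2:ℝ)^s)^2 * ((n:ℝ)⁻¹)^2 * (sobNorm s q)^2
        * (shiftNorm s j w)^2) * hst
    rw [hexp, hr]
    have h4 : (2/(n:ℝ))^2 = 4 * ((n:ℝ)⁻¹)^2 := by rw [div_pow]; ring
    rw [h4]
    have hK : (0:ℝ) ≤ ((2:ℝ)^s)^2 * τ * ((n:ℝ)⁻¹)^2 * Ar * Br :=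
      mul_nonneg (mul_nonneg (mul_nonneg (mul_nonneg (sq_nonneg _) hτ0.le)
        (sq_nonneg _)) hAr0) hBr0
    nlinarith [hK]
  calc shiftNorm s j (TnOp q lam n w)
      = Real.sqrt (shiftNormSq s j (TnOp q lam n w)) := rfl
    _ ≤ Real.sqrt ((6 * 2^s * Real.sqrt τ * (n:ℝ)⁻¹ * sobNorm s q * shiftNorm s j w)^2) :=
        Real.sqrt_le_sqrt (hreal.trans hfin)
    _ = 6 * 2^s * Real.sqrt τ * (n:ℝ)⁻¹ * sobNorm s q * shiftNorm s j w := by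
        rw [Real.sqrt_sq (by positivity)]
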